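/- arXiv:1212.3378 — 2 statements merged into one kernel-verified Lean document; each statement's English description precedes it below -/
import Mathlib

section
/- Let G be a finite group acting via a unitary representation U_a on H_a and U_s on H_s, and let {Π_k} be a projective measurement on H_s such that the group orbit {(U_s(g)Π_k U_s(g)†)_k : g ∈ G} contains at least n distinct projective measurements. If a state ρ_a on H_a satisfies: there exists a POVM {E_k} on H_s⊗H_a with Tr(E_k(ρ_s ⊗ U_a(g)ρ_a U_a(g)†)) = Tr(U_s(g)Π_k U_s(g)† ρ_s) for all g ∈ G, all states ρ_s, and all k; then the distinct states among {U_a(g)ρ_a U_a(g)† : g ∈ G} corresponding to distinct measurements are mutually orthogonal (product zero), and dim H_a ≥ n. -/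
open Matrix
open scoped ComplexOrder Kronecker

section SqrtCompat
open scoped MatrixOrder Norms.L2Operator
variable {m : Type*} [Fintype m] [DecidableEq m]

noncomputable def Matrix.PosSemidef.sqrt {A : Matrix m m ℂ} (_hA : A.PosSemidef) : Matrix m m ℂ :=
  CFC.sqrt A

lemma Matrix.PosSemidef.posSemidef_sqrt {A : Matrix m m ℂ} (hA : A.PosSemidef) :
    hA.sqrt.PosSemidef :=
  nonneg_iff_posSemidef.1 (CFC.sqrt_nonneg A)

lemma Matrix.PosSemidef.sqrt_mul_self {A : Matrix m m ℂ} (hA : A.PosSemidef) :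
    hA.sqrt * hA.sqrt = A :=
  CFC.sqrt_mul_sqrt_self A (nonneg_iff_posSemidef.2 hA)

end SqrtCompat

section Helpers
set_option linter.unusedSectionVars false
set_option linter.unusedVariables false
variable {m : Type*} [Fintype m] [DecidableEq m]

lemma vecMulVec_smul_smul (t c : ℂ) (x y : m → ℂ) :
    Matrix.vecMulVec (t • x) (c • y) = (t * c) • Matrix.vecMulVec x y := by
  ext i j
  simp [Matrix.vecMulVec_apply]
  ring


variable {m p : Type*} [Fintype m] [Fintype p] [DecidableEq m]

lemma trace_CHC_nonneg (C : Matrix p m ℂ) : 0 ≤ (Cᴴ * C).trace := by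
  rw [Matrix.trace]
  refine Finset.sum_nonneg fun j _ => ?_
  have : (Cᴴ * C) j j = dotProduct (star fun i => C i j) (fun i => C i j) := by
    simp [Matrix.mul_apply, dotProduct, Matrix.conjTranspose_apply]
  rw [Matrix.diag_apply, this]
  exact dotProduct_star_self_nonneg _

lemma eq_zero_of_trace_CHC (C : Matrix p m ℂ) (h : (Cᴴ * C).trace = 0) : C = 0 := by
  have hd : ∀ j, (Cᴴ * C) j j = 0 := by
    intro j
    have hnn : ∀ j ∈ Finset.univ, 0 ≤ ((Cᴴ*C).diag j) := by
      intro j _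
      have : (Cᴴ * C) j j = dotProduct (star fun i => C i j) (fun i => C i j) := by
        simp [Matrix.mul_apply, dotProduct, Matrix.conjTranspose_apply]
      rw [Matrix.diag_apply, this]
      exact dotProduct_star_self_nonneg _
    exact (Finset.sum_eq_zero_iff_of_nonneg hnn).1 h j (Finset.mem_univ j)
  ext i j
  have h2 : dotProduct (star fun i => C i j) (fun i => C i j) = 0 := by
    rw [← hd j]; simp [Matrix.mul_apply, dotProduct, Matrix.conjTranspose_apply]
  have := dotProduct_star_self_eq_zero.1 h2
  simpa using congrFun this i

lemma trace_conj_sqrt {A B : Matrix m m ℂ} (hA : A.PosSemidef) (hB : B.PosSemidef) :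
    (A * B).trace = ((hB.sqrt * hA.sqrt)ᴴ * (hB.sqrt * hA.sqrt)).trace := by
  have e1 : (hB.sqrt * hA.sqrt)ᴴ * (hB.sqrt * hA.sqrt) = hA.sqrt * (B * hA.sqrt) := by
    rw [Matrix.conjTranspose_mul, hA.posSemidef_sqrt.isHermitian.eq,
      hB.posSemidef_sqrt.isHermitian.eq, Matrix.mul_assoc hA.sqrt,
      ← Matrix.mul_assoc hB.sqrt, hB.sqrt_mul_self]
  rw [e1, Matrix.trace_mul_comm hA.sqrt (B * hA.sqrt), Matrix.mul_assoc,
    hA.sqrt_mul_self, Matrix.trace_mul_comm]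

lemma trace_mul_psd_nonneg {A B : Matrix m m ℂ} (hA : A.PosSemidef) (hB : B.PosSemidef) :
    0 ≤ (A * B).trace := by
  rw [trace_conj_sqrt hA hB]; exact trace_CHC_nonneg _

lemma mul_eq_zero_of_trace_mul {A B : Matrix m m ℂ} (hA : A.PosSemidef) (hB : B.PosSemidef)
    (h : (A * B).trace = 0) : A * B = 0 := by
  rw [trace_conj_sqrt hA hB] at h
  have h2 : hB.sqrt * hA.sqrt = 0 := eq_zero_of_trace_CHC _ h
  have e : A * B = hA.sqrt * (hB.sqrt * hA.sqrt)ᴴ * hB.sqrt := by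
    rw [Matrix.conjTranspose_mul, hA.posSemidef_sqrt.isHermitian.eq,
      hB.posSemidef_sqrt.isHermitian.eq, ← Matrix.mul_assoc, Matrix.mul_assoc _ _ hB.sqrt,
      hB.sqrt_mul_self, hA.sqrt_mul_self]
  rw [e, h2]
  simp

lemma psd_trace_nonneg {A : Matrix m m ℂ} (hA : A.PosSemidef) : 0 ≤ A.trace := by
  have := trace_mul_psd_nonneg hA (Matrix.PosSemidef.one (n := m) (R := ℂ))
  simpa using this
variable {m p : Type*} [Fintype m] [Fintype p] [DecidableEq m]

lemma vecMulVec_psd (v : m → ℂ) : (Matrix.vecMulVec v (star v)).PosSemidef := by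
  have : Matrix.vecMulVec v (star v) = Matrix.replicateCol Unit v * (Matrix.replicateCol Unit v)ᴴ := by
    rw [Matrix.conjTranspose_replicateCol, Matrix.vecMulVec_eq Unit]
  rw [this]
  exact Matrix.posSemidef_self_mul_conjTranspose _

lemma vecMulVec_trace (v w : m → ℂ) : (Matrix.vecMulVec v w).trace = w ⬝ᵥ v := by
  simp [Matrix.trace, Matrix.vecMulVec_apply, dotProduct, mul_comm]

lemma trace_mul_vecMulVec (M : Matrix m m ℂ) (v w : m → ℂ) :
    (M * Matrix.vecMulVec v w).trace = w ⬝ᵥ (M *ᵥ v) := by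
  simp only [Matrix.trace, Matrix.diag_apply, Matrix.mul_apply, Matrix.vecMulVec_apply,
    dotProduct, Matrix.mulVec, Finset.mul_sum]
  exact Finset.sum_congr rfl fun i _ => Finset.sum_congr rfl fun j _ => by ring

lemma vecMulVec_mulVec (v w u : m → ℂ) :
    Matrix.vecMulVec v w *ᵥ u = (w ⬝ᵥ u) • v := by
  ext i
  simp only [Matrix.mulVec, Matrix.vecMulVec_apply, dotProduct, Pi.smul_apply,
    smul_eq_mul, Finset.sum_mul]
  exact Finset.sum_congr rfl fun j _ => by ring

lemma normalize_vec (u : m → ℂ) (hu : u ≠ 0) :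
    ∃ (t : ℂ), t ≠ 0 ∧ star t = t ∧ star (t • u) ⬝ᵥ (t • u) = 1 := by
  set c : ℂ := star u ⬝ᵥ u with hc
  have hc0 : 0 ≤ c := dotProduct_star_self_nonneg u
  have hcne : c ≠ 0 := fun h => hu (dotProduct_star_self_eq_zero.1 h)
  have him : 0 = c.im := (Complex.nonneg_iff.1 hc0).2
  have hre : c = (c.re : ℂ) := by
    apply Complex.ext <;> simp [← him]
  have hrepos : 0 < c.re := by
    rcases (Complex.nonneg_iff.1 hc0).1.lt_or_eq with h | h
    · exact h
    · exact absurd (by rw [hre, ← h]; simp) hcne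
  set r : ℂ := ((Real.sqrt c.re : ℝ) : ℂ) with hr
  have hrne : r ≠ 0 := by
    rw [hr]
    exact_mod_cast (Real.sqrt_pos.2 hrepos).ne'
  have hrr : r * r = c := by
    rw [hr, ← Complex.ofReal_mul, Real.mul_self_sqrt hrepos.le, ← hre]
  have hstar : star r⁻¹ = r⁻¹ := by
    simp [hr, star_inv₀, Complex.star_def, Complex.conj_ofReal]
  refine ⟨r⁻¹, inv_ne_zero hrne, hstar, ?_⟩
  rw [star_smul, hstar, smul_dotProduct, dotProduct_smul, ← hc,
    smul_eq_mul, smul_eq_mul, ← mul_assoc, ← mul_inv, hrr, inv_mul_cancel₀ hcne]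
variable {m n : Type*} [Fintype m] [Fintype n] [DecidableEq m] [DecidableEq n]

lemma kron_conjTranspose (A : Matrix m m ℂ) (B : Matrix n n ℂ) :
    (A ⊗ₖ B)ᴴ = Aᴴ ⊗ₖ Bᴴ := by
  ext ⟨i, j⟩ ⟨k, l⟩
  simp [Matrix.conjTranspose_apply, Matrix.kroneckerMap_apply, mul_comm]

lemma kron_psd {A : Matrix m m ℂ} {B : Matrix n n ℂ}
    (hA : A.PosSemidef) (hB : B.PosSemidef) : (A ⊗ₖ B).PosSemidef := by
  have h1 : A ⊗ₖ B = (hA.sqrt ⊗ₖ hB.sqrt)ᴴ * (hA.sqrt ⊗ₖ hB.sqrt) := by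
    rw [kron_conjTranspose, hA.posSemidef_sqrt.isHermitian.eq,
      hB.posSemidef_sqrt.isHermitian.eq, ← Matrix.mul_kronecker_mul,
      hA.sqrt_mul_self, hB.sqrt_mul_self]
  rw [h1]
  exact Matrix.posSemidef_conjTranspose_mul_self _

lemma psd_sum {κ : Type*} [Fintype κ] (f : κ → Matrix m m ℂ) (s : Finset κ)
    (h : ∀ j ∈ s, (f j).PosSemidef) : (∑ j ∈ s, f j).PosSemidef :=
  Finset.sum_induction f _ (fun _ _ ha hb => ha.add hb) Matrix.PosSemidef.zero h

lemma one_sub_povm_psd {κ : Type*} [Fintype κ] [DecidableEq κ] {E : κ → Matrix m m ℂ}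
    (hEpos : ∀ k, (E k).PosSemidef) (hEsum : ∑ k, E k = 1) (k : κ) :
    (1 - E k).PosSemidef := by
  have h : 1 - E k = ∑ j ∈ Finset.univ.erase k, E j := by
    have h0 := Finset.sum_erase_add Finset.univ E (Finset.mem_univ k)
    rw [hEsum] at h0
    exact (eq_sub_of_add_eq h0).symm
  rw [h]
  exact psd_sum _ _ fun j _ => hEpos j

lemma proj_fix {q : Matrix m m ℂ} (hqh : q.IsHermitian) (hqi : q * q = q)
    {v : m → ℂ} (hv : star v ⬝ᵥ v = 1) (h1 : star v ⬝ᵥ (q *ᵥ v) = 1) : q *ᵥ v = v := by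
  have e1 : star (q *ᵥ v) ⬝ᵥ v = 1 := by
    rw [Matrix.star_mulVec, ← Matrix.dotProduct_mulVec, hqh.eq, h1]
  have e2 : star (q *ᵥ v) ⬝ᵥ (q *ᵥ v) = 1 := by
    rw [Matrix.star_mulVec, ← Matrix.dotProduct_mulVec, hqh.eq, Matrix.mulVec_mulVec, hqi, h1]
  have key : star (v - q *ᵥ v) ⬝ᵥ (v - q *ᵥ v) = 0 := by
    rw [star_sub, sub_dotProduct, dotProduct_sub, dotProduct_sub,
      hv, h1, e1, e2]
    ring
  have := dotProduct_star_self_eq_zero.1 key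
  have h2 : v - q *ᵥ v = 0 := this
  rw [sub_eq_zero] at h2
  exact h2.symm

lemma subset_fix {p q : Matrix m m ℂ} (hph : p.IsHermitian) (hpi : p * p = p)
    (hqh : q.IsHermitian) (hqi : q * q = q)
    (h : ∀ v : m → ℂ, star v ⬝ᵥ v = 1 → p *ᵥ v = v → star v ⬝ᵥ (q *ᵥ v) = 1) :
    q * p = p := by
  have hvec : ∀ w, q *ᵥ (p *ᵥ w) = p *ᵥ w := by
    intro w
    by_cases hx : p *ᵥ w = 0
    · simp [hx]
    · obtain ⟨t, ht0, hts, htv⟩ := normalize_vec _ hx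
      set x := p *ᵥ w with hxdef
      have hfixx : p *ᵥ x = x := by
        rw [hxdef, Matrix.mulVec_mulVec, hpi]
      have hfix : p *ᵥ (t • x) = t • x := by rw [Matrix.mulVec_smul, hfixx]
      have h1 := h (t • x) htv hfix
      have h2 := proj_fix hqh hqi htv h1
      rw [Matrix.mulVec_smul] at h2
      exact smul_right_injective _ ht0 h2
  ext i j
  have := congrFun (hvec (Pi.single j 1)) i
  rw [Matrix.mulVec_mulVec] at this
  simpa [Matrix.mulVec_single] using this

lemma dichotomy {κ : Type*} [Fintype κ] (Q Q' : κ → Matrix m m ℂ)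
    (hQh : ∀ k, (Q k).IsHermitian) (hQi : ∀ k, Q k * Q k = Q k)
    (hQ'h : ∀ k, (Q' k).IsHermitian) (hQ'i : ∀ k, Q' k * Q' k = Q' k)
    (hne : Q ≠ Q') :
    (∃ k v, star v ⬝ᵥ v = 1 ∧ Q k *ᵥ v = v ∧ star v ⬝ᵥ (Q' k *ᵥ v) ≠ 1) ∨
    (∃ k v, star v ⬝ᵥ v = 1 ∧ Q' k *ᵥ v = v ∧ star v ⬝ᵥ (Q k *ᵥ v) ≠ 1) := by
  by_contra hcon
  push_neg at hcon
  obtain ⟨h1, h2⟩ := hcon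
  apply hne
  funext k
  have e1 : Q' k * Q k = Q k :=
    subset_fix (hQh k) (hQi k) (hQ'h k) (hQ'i k) (fun v hv hf => h1 k v hv hf)
  have e2 : Q k * Q' k = Q' k :=
    subset_fix (hQ'h k) (hQ'i k) (hQh k) (hQi k) (fun v hv hf => h2 k v hv hf)
  calc Q k = (Q' k * Q k)ᴴ := by rw [e1, (hQh k).eq]
    _ = Q k * Q' k := by rw [Matrix.conjTranspose_mul, (hQh k).eq, (hQ'h k).eq]
    _ = Q' k := e2

lemma key {s a κ : Type*} [Fintype s] [DecidableEq s] [Fintype a] [DecidableEq a]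
    [Fintype κ] [DecidableEq κ]
    (Q Q' : κ → Matrix s s ℂ)
    (hQ'o : ∀ k l, k ≠ l → Q' k * Q' l = 0) (hQ's : ∑ k, Q' k = 1)
    (σ σ' : Matrix a a ℂ) (hσ : σ.PosSemidef) (hσtr : σ.trace = 1) (hσ' : σ'.PosSemidef)
    (E : κ → Matrix (s × a) (s × a) ℂ)
    (hEpos : ∀ k, (E k).PosSemidef) (hEsum : ∑ k, E k = 1)
    (hE : ∀ k, ∀ ρs : Matrix s s ℂ, ρs.PosSemidef → ρs.trace = 1 →
      (E k * (ρs ⊗ₖ σ)).trace = (Q k * ρs).trace)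
    (hE' : ∀ k, ∀ ρs : Matrix s s ℂ, ρs.PosSemidef → ρs.trace = 1 →
      (E k * (ρs ⊗ₖ σ')).trace = (Q' k * ρs).trace)
    (k : κ) (v : s → ℂ) (hv : star v ⬝ᵥ v = 1) (hfix : Q k *ᵥ v = v)
    (hne1 : star v ⬝ᵥ (Q' k *ᵥ v) ≠ 1) :
    σ * σ' = 0 := by
  set ρv := Matrix.vecMulVec v (star v) with hρv
  have hρvpsd : ρv.PosSemidef := vecMulVec_psd v
  have hρvtr : ρv.trace = 1 := by rw [hρv, vecMulVec_trace]; exact hv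
  set A := ρv ⊗ₖ σ with hA
  have hApsd : A.PosSemidef := kron_psd hρvpsd hσ
  have hAtr : A.trace = 1 := by rw [hA, Matrix.trace_kronecker, hρvtr, hσtr, one_mul]
  have hEkA : (E k * A).trace = 1 := by
    rw [hA, hE k ρv hρvpsd hρvtr, hρv, trace_mul_vecMulVec, hfix, hv]
  have h1mE : ((1 - E k) * A).trace = 0 := by
    rw [sub_mul, one_mul, Matrix.trace_sub, hAtr, hEkA, sub_self]
  have hzero : (1 - E k) * A = 0 :=
    mul_eq_zero_of_trace_mul (one_sub_povm_psd hEpos hEsum k) hApsd h1mE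
  have hAE : A * E k = A := by
    have hct := congrArg Matrix.conjTranspose hzero
    rw [Matrix.conjTranspose_mul, hApsd.isHermitian.eq,
      (one_sub_povm_psd hEpos hEsum k).isHermitian.eq, Matrix.conjTranspose_zero] at hct
    rw [Matrix.mul_sub, Matrix.mul_one, sub_eq_zero] at hct
    exact hct.symm
  -- the orbit vectors under Q'
  set u : κ → s → ℂ := fun j => Q' j *ᵥ v with hu
  set N : κ → Matrix s s ℂ := fun j => Matrix.vecMulVec (u j) (star (u j)) with hN
  have claimEB : ∀ j, j ≠ k → E k * (N j ⊗ₖ σ') = 0 := by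
    intro j hj
    by_cases hu0 : u j = 0
    · rw [hN]
      simp only [hu0]
      rw [show Matrix.vecMulVec (0 : s → ℂ) (star (0 : s → ℂ)) = 0 by
        ext i l; simp [Matrix.vecMulVec_apply]]
      rw [Matrix.zero_kronecker, Matrix.mul_zero]
    · obtain ⟨t, ht0, hts, htv⟩ := normalize_vec _ hu0
      set M := Matrix.vecMulVec (t • u j) (star (t • u j)) with hM
      have hMpsd : M.PosSemidef := vecMulVec_psd _
      have hMtr : M.trace = 1 := by rw [hM, vecMulVec_trace]; exact htv
      have hQM : (Q' k * M).trace = 0 := by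
        rw [hM, trace_mul_vecMulVec, Matrix.mulVec_smul, hu, Matrix.mulVec_mulVec,
          hQ'o k j (Ne.symm hj)]
        simp
      have hEM : E k * (M ⊗ₖ σ') = 0 := by
        refine mul_eq_zero_of_trace_mul (hEpos k) (kron_psd hMpsd hσ') ?_
        rw [hE' k M hMpsd hMtr, hQM]
      have hMN : M = (t * star t) • N j := by
        rw [hM, hN, star_smul, vecMulVec_smul_smul]
      rw [hMN, Matrix.smul_kronecker, Matrix.mul_smul, smul_eq_zero] at hEM
      rcases hEM with h | h
      · exfalso
        rcases mul_eq_zero.1 h with h' | h'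
        · exact ht0 h'
        · exact ht0 (star_eq_zero.1 h')
      · exact h
  have hAB : ∀ j, j ≠ k → A * (N j ⊗ₖ σ') = 0 := by
    intro j hj
    rw [← hAE, Matrix.mul_assoc, claimEB j hj, Matrix.mul_zero]
  set c : κ → ℂ := fun j => star v ⬝ᵥ (u j) with hcdef
  have htr : ∀ j, j ≠ k → c j * star (c j) * (σ * σ').trace = 0 := by
    intro j hj
    have h1 : A * (N j ⊗ₖ σ') = (ρv * N j) ⊗ₖ (σ * σ') := by
      rw [hA, Matrix.mul_kronecker_mul]
    have h2 := hAB j hj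
    rw [h1] at h2
    have h3 := congrArg Matrix.trace h2
    rw [Matrix.trace_kronecker, Matrix.trace_zero] at h3
    have h4 : (ρv * N j).trace = c j * star (c j) := by
      rw [hN, trace_mul_vecMulVec, hρv, _root_.vecMulVec_mulVec, dotProduct_smul,
        smul_eq_mul, hcdef]
      congr 1
      rw [Matrix.star_dotProduct]
    rw [h4] at h3
    exact h3
  -- sum of c j equals 1
  have hsumc : ∑ j, c j = 1 := by
    have e1 : ∀ j, c j = (Q' j * ρv).trace := by
      intro j
      rw [hρv, trace_mul_vecMulVec, hcdef, hu]
    calc ∑ j, c j = ∑ j, (Q' j * ρv).trace := by simp_rw [e1]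
      _ = ((∑ j, Q' j) * ρv).trace := by rw [Finset.sum_mul, Matrix.trace_sum]
      _ = 1 := by rw [hQ's, Matrix.one_mul, hρvtr]
  have hT : (σ * σ').trace = 0 := by
    by_contra hT
    have hcz : ∀ j, j ≠ k → c j = 0 := by
      intro j hj
      have := htr j hj
      rcases mul_eq_zero.1 this with h | h
      · rcases mul_eq_zero.1 h with h | h
        · exact h
        · exact star_eq_zero.1 h
      · exact absurd h hT
    have : ∑ j, c j = c k := Finset.sum_eq_single k (fun j _ hj => hcz j hj) (by simp)
    rw [hsumc] at this
    exact hne1 (by rw [hcdef] at this; exact this.symm ▸ rfl)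
  exact mul_eq_zero_of_trace_mul hσ hσ' hT

lemma conjU_mul {U A B : Matrix m m ℂ} (hU : Uᴴ * U = 1) :
    (U * A * Uᴴ) * (U * B * Uᴴ) = U * (A * B) * Uᴴ := by
  simp only [Matrix.mul_assoc]
  rw [← Matrix.mul_assoc Uᴴ U (B * Uᴴ), hU, Matrix.one_mul]

lemma conj_herm {U A : Matrix m m ℂ} (hA : A.IsHermitian) : (U * A * Uᴴ).IsHermitian := by
  unfold Matrix.IsHermitian
  rw [Matrix.conjTranspose_mul, Matrix.conjTranspose_mul, Matrix.conjTranspose_conjTranspose,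
    hA.eq, Matrix.mul_assoc]

end Helpers

/-- WAY-type no-go result from no-programming: if a resource state `ρa`
covariantly programs the group orbit of a projective measurement `{P k}` whose
orbit contains at least `n` distinct projective measurements, then orbit states
corresponding to distinct measurements are mutually orthogonal, and
`dim H_a ≥ n`. -/
theorem way_no_go_from_no_programming
    {G : Type*} [Group G] [Fintype G]
    {s a κ : Type*} [Fintype s] [DecidableEq s] [Fintype a] [DecidableEq a] [Fintype κ]
    (Us : G →* Matrix.unitaryGroup s ℂ) (Ua : G →* Matrix.unitaryGroup a ℂ)
    (P : κ → Matrix s s ℂ)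
    (hherm : ∀ k, (P k).IsHermitian) (hidem : ∀ k, P k * P k = P k)
    (horth : ∀ k l, k ≠ l → P k * P l = 0) (hsum : ∑ k, P k = 1)
    (n : ℕ) (g : Fin n → G)
    (hdist : ∀ i j, i ≠ j →
      (fun k => (Us (g i) : Matrix s s ℂ) * P k * (Us (g i) : Matrix s s ℂ)ᴴ) ≠
      (fun k => (Us (g j) : Matrix s s ℂ) * P k * (Us (g j) : Matrix s s ℂ)ᴴ))
    (ρa : Matrix a a ℂ) (hρa : ρa.PosSemidef) (hρatr : ρa.trace = 1)
    (E : κ → Matrix (s × a) (s × a) ℂ)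
    (hEpos : ∀ k, (E k).PosSemidef) (hEsum : ∑ k, E k = 1)
    (hsim : ∀ (h : G) (k : κ), ∀ ρs : Matrix s s ℂ, ρs.PosSemidef → ρs.trace = 1 →
      (E k * (ρs ⊗ₖ ((Ua h : Matrix a a ℂ) * ρa * (Ua h : Matrix a a ℂ)ᴴ))).trace =
      ((Us h : Matrix s s ℂ) * P k * (Us h : Matrix s s ℂ)ᴴ * ρs).trace) :
    (∀ h h' : G,
      (fun k => (Us h : Matrix s s ℂ) * P k * (Us h : Matrix s s ℂ)ᴴ) ≠
      (fun k => (Us h' : Matrix s s ℂ) * P k * (Us h' : Matrix s s ℂ)ᴴ) →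
      ((Ua h : Matrix a a ℂ) * ρa * (Ua h : Matrix a a ℂ)ᴴ) *
      ((Ua h' : Matrix a a ℂ) * ρa * (Ua h' : Matrix a a ℂ)ᴴ) = 0) ∧
    n ≤ Fintype.card a := by
  classical
  -- abbreviations
  set Q : G → κ → Matrix s s ℂ :=
    fun h k => (Us h : Matrix s s ℂ) * P k * (Us h : Matrix s s ℂ)ᴴ with hQdef
  set σ : G → Matrix a a ℂ :=
    fun h => (Ua h : Matrix a a ℂ) * ρa * (Ua h : Matrix a a ℂ)ᴴ with hσdef
  have hUs1 : ∀ h : G, (Us h : Matrix s s ℂ)ᴴ * (Us h : Matrix s s ℂ) = 1 := by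
    intro h
    have := Matrix.UnitaryGroup.star_mul_self (Us h)
    rwa [Matrix.star_eq_conjTranspose] at this
  have hUs2 : ∀ h : G, (Us h : Matrix s s ℂ) * (Us h : Matrix s s ℂ)ᴴ = 1 := by
    intro h
    have := (Us h).2.2
    rwa [Matrix.star_eq_conjTranspose] at this
  have hUa1 : ∀ h : G, (Ua h : Matrix a a ℂ)ᴴ * (Ua h : Matrix a a ℂ) = 1 := by
    intro h
    have := Matrix.UnitaryGroup.star_mul_self (Ua h)
    rwa [Matrix.star_eq_conjTranspose] at this
  -- properties of the conjugated families
  have hQh : ∀ h k, (Q h k).IsHermitian := fun h k => conj_herm (hherm k)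
  have hQi : ∀ h k, Q h k * Q h k = Q h k := by
    intro h k
    show (_ * P k * _) * (_ * P k * _) = _
    rw [conjU_mul (hUs1 h), hidem]
  have hQo : ∀ h k l, k ≠ l → Q h k * Q h l = 0 := by
    intro h k l hkl
    show (_ * P k * _) * (_ * P l * _) = _
    rw [conjU_mul (hUs1 h), horth k l hkl]
    simp
  have hQs : ∀ h, ∑ k, Q h k = 1 := by
    intro h
    have : ∑ k, Q h k = (Us h : Matrix s s ℂ) * (∑ k, P k) * (Us h : Matrix s s ℂ)ᴴ := by
      rw [Finset.mul_sum, Finset.sum_mul]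
    rw [this, hsum, Matrix.mul_one, hUs2]
  have hσpsd : ∀ h, (σ h).PosSemidef := fun h => hρa.mul_mul_conjTranspose_same _
  have hσtr : ∀ h, (σ h).trace = 1 := by
    intro h
    show ((Ua h : Matrix a a ℂ) * ρa * (Ua h : Matrix a a ℂ)ᴴ).trace = 1
    rw [Matrix.trace_mul_cycle, hUa1, Matrix.one_mul, hρatr]
  have hE : ∀ (h : G) (k : κ), ∀ ρs : Matrix s s ℂ, ρs.PosSemidef → ρs.trace = 1 →
      (E k * (ρs ⊗ₖ σ h)).trace = (Q h k * ρs).trace := fun h k ρs h1 h2 =>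
    hsim h k ρs h1 h2
  -- part 1
  have part1 : ∀ h h' : G, Q h ≠ Q h' → σ h * σ h' = 0 := by
    intro h h' hne
    rcases dichotomy (Q h) (Q h') (hQh h) (hQi h) (hQh h') (hQi h') hne with
      ⟨k, v, hv, hfix, hne1⟩ | ⟨k, v, hv, hfix, hne1⟩
    · exact key (Q h) (Q h') (hQo h') (hQs h') (σ h) (σ h') (hσpsd h) (hσtr h) (hσpsd h')
        E hEpos hEsum (hE h) (hE h') k v hv hfix hne1
    · have h0 : σ h' * σ h = 0 :=
        key (Q h') (Q h) (hQo h) (hQs h) (σ h') (σ h) (hσpsd h') (hσtr h') (hσpsd h)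
          E hEpos hEsum (hE h') (hE h) k v hv hfix hne1
      have := congrArg Matrix.conjTranspose h0
      rwa [Matrix.conjTranspose_mul, (hσpsd h).isHermitian.eq, (hσpsd h').isHermitian.eq,
        Matrix.conjTranspose_zero] at this
  refine ⟨part1, ?_⟩
  -- part 2 : dimension bound
  by_cases hn : n = 0
  · simp [hn]
  have hστ : ∀ i j : Fin n, i ≠ j → σ (g i) * σ (g j) = 0 := fun i j hij =>
    part1 (g i) (g j) (hdist i j hij)
  have hσne : ∀ i : Fin n, σ (g i) ≠ 0 := by
    intro i hzero
    have := hσtr (g i)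
    rw [hzero, Matrix.trace_zero] at this
    exact one_ne_zero this.symm
  -- choose a vector not annihilated by each σ (g i)
  have hvex : ∀ i : Fin n, ∃ v : a → ℂ, σ (g i) *ᵥ v ≠ 0 := by
    intro i
    by_contra hcon
    push_neg at hcon
    apply hσne i
    ext x y
    have := congrFun (hcon (Pi.single y 1)) x
    simpa [Matrix.mulVec_single] using this
  choose v hvne using hvex
  set w : Fin n → (a → ℂ) := fun i => σ (g i) *ᵥ v i with hw
  have hwo : ∀ i j : Fin n, i ≠ j → star (w i) ⬝ᵥ w j = 0 := by
    intro i j hij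
    rw [hw]
    show star (σ (g i) *ᵥ v i) ⬝ᵥ (σ (g j) *ᵥ v j) = 0
    rw [Matrix.star_mulVec, ← Matrix.dotProduct_mulVec, (hσpsd (g i)).isHermitian.eq,
      Matrix.mulVec_mulVec, hστ i j hij]
    simp [Matrix.zero_mulVec]
  have hli : LinearIndependent ℂ w := by
    rw [Fintype.linearIndependent_iff]
    intro c hc i
    have hdot : star (w i) ⬝ᵥ (∑ j, c j • w j) = c i * (star (w i) ⬝ᵥ w i) := by
      have e1 : star (w i) ⬝ᵥ (∑ j, c j • w j) = ∑ j, c j * (star (w i) ⬝ᵥ w j) := by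
        simp only [dotProduct, Finset.sum_apply, Pi.smul_apply, smul_eq_mul,
          Finset.mul_sum]
        rw [Finset.sum_comm]
        exact Finset.sum_congr rfl fun x _ => Finset.sum_congr rfl fun y _ => by ring
      rw [e1, Finset.sum_eq_single i (fun j _ hj => by
          rw [hwo i j (Ne.symm hj), mul_zero]) (by simp)]
    rw [hc] at hdot
    simp only [dotProduct_zero] at hdot
    have hne := fun hz => hvne i (dotProduct_star_self_eq_zero.1 hz)
    rcases mul_eq_zero.1 hdot.symm with h | h
    · exact h
    · exact absurd h hne
  have hcard := hli.fintype_card_le_finrank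
  rwa [Fintype.card_fin, Module.finrank_pi] at hcard
end

section
/- Let P₁ ≠ P₂ be two projectors on H_s with ‖P₁ − P₂‖ < 1 in operator norm (so there is a unit vector |α⟩ in the range of P₁ and |β⟩ in the kernel of P₂ with ⟨α|β⟩ ≠ 0). Suppose program states |φ₁⟩, |φ₂⟩ and an effect E on H_s⊗H_a satisfy |⟨α⊗φ₁|E|α⊗φ₁⟩ − 1| ≤ ε and ⟨β⊗φ₂|E|β⊗φ₂⟩ ≤ ε. Then |⟨φ₁|φ₂⟩| ≤ (√(2ε) + √ε)/|⟨α|β⟩|, giving a quantitative bound on approximate programming. -/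
open Matrix
open scoped ComplexOrder

lemma cs_vec {n : Type*} [Fintype n] (u v : n → ℂ) :
    ‖star u ⬝ᵥ v‖ ≤ Real.sqrt (star u ⬝ᵥ u).re * Real.sqrt (star v ⬝ᵥ v).re := by
  have key : ∀ x y : EuclideanSpace ℂ n, star (x : n → ℂ) ⬝ᵥ (y : n → ℂ) = inner (𝕜 := ℂ) x y := by
    intro x y; simp [inner, dotProduct, mul_comm]
  have h2 : ∀ x : EuclideanSpace ℂ n, Real.sqrt (star (x : n → ℂ) ⬝ᵥ (x : n → ℂ)).re = ‖x‖ := by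
    intro x
    rw [key, show (inner (𝕜 := ℂ) x x).re = RCLike.re (K := ℂ) (inner (𝕜 := ℂ) x x) from rfl,
      inner_self_eq_norm_sq]
    exact Real.sqrt_sq (norm_nonneg _)
  have e1 := key (WithLp.toLp 2 u) (WithLp.toLp 2 v)
  have e2 := h2 (WithLp.toLp 2 u)
  have e3 := h2 (WithLp.toLp 2 v)
  simp only [WithLp.ofLp_toLp] at e1 e2 e3
  rw [e1, e2, e3]
  exact norm_inner_le_norm _ _

lemma quad_cs {n : Type*} [Fintype n] {M : Matrix n n ℂ} (hM : M.PosSemidef) (x y : n → ℂ) :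
    ‖star x ⬝ᵥ (M *ᵥ y)‖ ≤
      Real.sqrt (star x ⬝ᵥ (M *ᵥ x)).re * Real.sqrt (star y ⬝ᵥ (M *ᵥ y)).re := by
  classical
  open scoped MatrixOrder Matrix.Norms.L2Operator in
  obtain ⟨B, rfl⟩ := CStarAlgebra.nonneg_iff_eq_star_mul_self.mp hM.nonneg
  rw [star_eq_conjTranspose]
  have key : ∀ u v : n → ℂ, star u ⬝ᵥ ((Bᴴ * B) *ᵥ v) = star (B *ᵥ u) ⬝ᵥ (B *ᵥ v) := by
    intro u v
    rw [star_mulVec, dotProduct_mulVec, dotProduct_mulVec, vecMul_vecMul]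
  rw [key, key, key]
  exact cs_vec _ _

lemma tensor_dot {s a : Type*} [Fintype s] [Fintype a] (α β : s → ℂ) (φ ψ : a → ℂ) :
    star (fun p : s × a => α p.1 * φ p.2) ⬝ᵥ (fun p : s × a => β p.1 * ψ p.2) =
      (star α ⬝ᵥ β) * (star φ ⬝ᵥ ψ) := by
  simp only [dotProduct, Fintype.sum_prod_type, Finset.sum_mul, Finset.mul_sum, Pi.star_apply]
  rw [Finset.sum_comm]
  refine Finset.sum_congr rfl fun j _ => Finset.sum_congr rfl fun i _ => ?_
  simp only [star_mul']
  ring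

/-- Quantitative no-programming bound: if an effect `E` approximately accepts
`α⊗φ₁` (up to `ε`) and approximately rejects `β⊗φ₂` (up to `ε`), where `α` is
in the range of `P₁`, `β` is in the kernel of `P₂`, and `⟨α|β⟩ ≠ 0`, then
`|⟨φ₁|φ₂⟩| ≤ (√(2ε) + √ε)/|⟨α|β⟩|`. -/
theorem approximate_no_programming_bound
    {s a : Type*} [Fintype s] [DecidableEq s] [Fintype a] [DecidableEq a]
    (P₁ P₂ : Matrix s s ℂ)
    (hP₁herm : P₁.IsHermitian) (hP₁idem : P₁ * P₁ = P₁)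
    (hP₂herm : P₂.IsHermitian) (hP₂idem : P₂ * P₂ = P₂)
    (hP : P₁ ≠ P₂)
    (α β : s → ℂ) (hα : star α ⬝ᵥ α = 1) (hβ : star β ⬝ᵥ β = 1)
    (hαP : P₁ *ᵥ α = α) (hβP : P₂ *ᵥ β = 0)
    (hab : star α ⬝ᵥ β ≠ 0)
    (φ₁ φ₂ : a → ℂ) (hφ₁ : star φ₁ ⬝ᵥ φ₁ = 1) (hφ₂ : star φ₂ ⬝ᵥ φ₂ = 1)
    (E : Matrix (s × a) (s × a) ℂ) (hE : E.PosSemidef) (hE' : (1 - E).PosSemidef)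
    (ε : ℝ) (hε : 0 ≤ ε)
    (h₁ : ‖
      (star (fun p : s × a => α p.1 * φ₁ p.2) ⬝ᵥ
        (E *ᵥ fun p : s × a => α p.1 * φ₁ p.2) - 1)‖ ≤ ε)
    (h₂ : (star (fun p : s × a => β p.1 * φ₂ p.2) ⬝ᵥ
        (E *ᵥ fun p : s × a => β p.1 * φ₂ p.2)).re ≤ ε) :
    ‖star φ₁ ⬝ᵥ φ₂‖ ≤
      (Real.sqrt (2 * ε) + Real.sqrt ε) / ‖star α ⬝ᵥ β‖ := by
  set ψ : s × a → ℂ := fun p => α p.1 * φ₁ p.2 with hψdef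
  set χ : s × a → ℂ := fun p => β p.1 * φ₂ p.2 with hχdef
  have nψ : star ψ ⬝ᵥ ψ = 1 := by rw [hψdef, tensor_dot, hα, hφ₁, one_mul]
  have nχ : star χ ⬝ᵥ χ = 1 := by rw [hχdef, tensor_dot, hβ, hφ₂, one_mul]
  set A : ℝ := (star ψ ⬝ᵥ (E *ᵥ ψ)).re with hAdef
  set Bq : ℝ := (star χ ⬝ᵥ (E *ᵥ χ)).re with hBdef
  have reconv : ∀ (M : Matrix (s × a) (s × a) ℂ) (hM : M.PosSemidef) (x : s × a → ℂ),
      0 ≤ (star x ⬝ᵥ (M *ᵥ x)).re := by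
    intro M hM x
    exact hM.re_dotProduct_nonneg x
  have hA0 : 0 ≤ A := reconv E hE ψ
  have hB0 : 0 ≤ Bq := reconv E hE χ
  have hBε : Bq ≤ ε := h₂
  have hA1 : |A - 1| ≤ ε := by
    have : (star ψ ⬝ᵥ (E *ᵥ ψ) - 1).re = A - 1 := by simp [hAdef]
    calc |A - 1| = |(star ψ ⬝ᵥ (E *ᵥ ψ) - 1).re| := by rw [this]
      _ ≤ ‖star ψ ⬝ᵥ (E *ᵥ ψ) - 1‖ := Complex.abs_re_le_norm _
      _ ≤ ε := h₁
  have hsub : ∀ x : s × a → ℂ, star x ⬝ᵥ ((1 - E) *ᵥ x) = star x ⬝ᵥ x - star x ⬝ᵥ (E *ᵥ x) := by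
    intro x
    rw [Matrix.sub_mulVec, Matrix.one_mulVec, dotProduct_sub]
  have hAle1 : A ≤ 1 := by
    have h := reconv _ hE' ψ
    rw [hsub ψ, nψ] at h
    have : (1 - star ψ ⬝ᵥ (E *ᵥ ψ) : ℂ).re = 1 - A := by simp [hAdef]
    rw [this] at h; linarith
  have hBle1 : Bq ≤ 1 := by
    have h := reconv _ hE' χ
    rw [hsub χ, nχ] at h
    have : (1 - star χ ⬝ᵥ (E *ᵥ χ) : ℂ).re = 1 - Bq := by simp [hBdef]
    rw [this] at h; linarith
  -- quadratic forms of 1 - E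
  have hA' : (star ψ ⬝ᵥ ((1 - E) *ᵥ ψ)).re = 1 - A := by
    rw [hsub ψ, nψ]; simp [hAdef]
  have hB' : (star χ ⬝ᵥ ((1 - E) *ᵥ χ)).re = 1 - Bq := by
    rw [hsub χ, nχ]; simp [hBdef]
  -- split
  have hsplit : star ψ ⬝ᵥ χ = star ψ ⬝ᵥ (E *ᵥ χ) + star ψ ⬝ᵥ ((1 - E) *ᵥ χ) := by
    rw [← dotProduct_add, ← Matrix.add_mulVec]
    simp
  have t1 : ‖star ψ ⬝ᵥ (E *ᵥ χ)‖ ≤ Real.sqrt ε := by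
    calc ‖star ψ ⬝ᵥ (E *ᵥ χ)‖
        ≤ Real.sqrt A * Real.sqrt Bq := quad_cs hE ψ χ
      _ ≤ 1 * Real.sqrt ε :=
          mul_le_mul (Real.sqrt_le_one.mpr hAle1) (Real.sqrt_le_sqrt hBε)
            (Real.sqrt_nonneg _) zero_le_one
      _ = Real.sqrt ε := one_mul _
  have t2 : ‖star ψ ⬝ᵥ ((1 - E) *ᵥ χ)‖ ≤ Real.sqrt ε := by
    calc ‖star ψ ⬝ᵥ ((1 - E) *ᵥ χ)‖
        ≤ Real.sqrt (star ψ ⬝ᵥ ((1 - E) *ᵥ ψ)).re * Real.sqrt (star χ ⬝ᵥ ((1 - E) *ᵥ χ)).re :=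
          quad_cs hE' ψ χ
      _ = Real.sqrt (1 - A) * Real.sqrt (1 - Bq) := by rw [hA', hB']
      _ ≤ Real.sqrt ε * 1 :=
          mul_le_mul (Real.sqrt_le_sqrt (by have h := abs_le.mp hA1; linarith [h.1, h.2]))
            (Real.sqrt_le_one.mpr (by linarith)) (Real.sqrt_nonneg _) (Real.sqrt_nonneg _)
      _ = Real.sqrt ε := mul_one _
  have hmain : ‖star ψ ⬝ᵥ χ‖ ≤ Real.sqrt (2 * ε) + Real.sqrt ε := by
    calc ‖star ψ ⬝ᵥ χ‖
        ≤ ‖star ψ ⬝ᵥ (E *ᵥ χ)‖ + ‖star ψ ⬝ᵥ ((1 - E) *ᵥ χ)‖ := by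
          rw [hsplit]; exact norm_add_le _ _
      _ ≤ Real.sqrt ε + Real.sqrt ε := add_le_add t1 t2
      _ ≤ Real.sqrt (2 * ε) + Real.sqrt ε :=
          add_le_add_left (Real.sqrt_le_sqrt (by linarith)) _
  have hfac : star ψ ⬝ᵥ χ = (star α ⬝ᵥ β) * (star φ₁ ⬝ᵥ φ₂) := tensor_dot α β φ₁ φ₂
  have habpos : 0 < ‖star α ⬝ᵥ β‖ := norm_pos_iff.mpr hab
  rw [le_div_iff₀ habpos]
  calc ‖star φ₁ ⬝ᵥ φ₂‖ * ‖star α ⬝ᵥ β‖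
      = ‖star ψ ⬝ᵥ χ‖ := by rw [hfac, norm_mul, mul_comm]
    _ ≤ Real.sqrt (2 * ε) + Real.sqrt ε := hmain
end
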